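/- Let π: Γ̃ → Γ be a dilated harmonic double cover of metric graphs, let F ⊂ E(Γ) be a set of h = g(Γ̃) − g(Γ) undilated edges, and let Γ∖F = Γ₁ ∪ ⋯ ∪ Γ_k be the decomposition into connected components. Then F is an ogod if and only if each Γᵢ satisfies exactly one of the following: (1) Γᵢ contains a unique connected component of the dilation subgraph Γ_dil, and g(Γᵢ) equals the genus of that component; or (2) Γᵢ has no dilated vertices or edges, g(Γᵢ) = 1, and Γᵢ has connected preimage in Γ̃. -/

import Mathlib

open scoped Classical
noncomputable section

/-- A (model of a) metric graph: a finite (multi)graph with oriented edges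
and positive edge lengths. -/
structure MetricGraph where
  V : Type
  E : Type
  [fintV : Fintype V]
  [fintE : Fintype E]
  s : E → V
  t : E → V
  len : E → ℝ
  len_pos : ∀ e, 0 < len e

attribute [instance] MetricGraph.fintV MetricGraph.fintE

namespace MetricGraph

/-- Two vertices are adjacent if some edge joins them. -/
def Adj (G : MetricGraph) (u v : G.V) : Prop :=
  ∃ e : G.E, (G.s e = u ∧ G.t e = v) ∨ (G.s e = v ∧ G.t e = u)

/-- Reachability by walks. -/
def Reach (G : MetricGraph) : G.V → G.V → Prop :=
  Relation.ReflTransGen G.Adj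

/-- A graph is connected if it is nonempty and any two vertices are joined by a walk. -/
def Connected (G : MetricGraph) : Prop :=
  Nonempty G.V ∧ ∀ u v : G.V, G.Reach u v

/-- The genus (first Betti number) of a connected graph: #E - #V + 1. -/
def genus (G : MetricGraph) : ℤ :=
  (Fintype.card G.E : ℤ) - (Fintype.card G.V : ℤ) + 1

/-- The number of connected components. -/
def numComponents (G : MetricGraph) : ℕ :=
  Nat.card (Quot G.Reach)

/-- A tree is a connected graph with #V = #E + 1. -/
def IsTree (G : MetricGraph) : Prop :=
  G.Connected ∧ Fintype.card G.E + 1 = Fintype.card G.V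

/-- A loop is an edge whose endpoints coincide. -/
def IsLoop (G : MetricGraph) (e : G.E) : Prop := G.s e = G.t e

/-- Delete a set of edges. -/
def deleteEdges (G : MetricGraph) (F : Set G.E) : MetricGraph where
  V := G.V
  E := {e : G.E // e ∉ F}
  fintV := G.fintV
  fintE := Fintype.ofFinite _
  s e := G.s e.1
  t e := G.t e.1
  len e := G.len e.1
  len_pos e := G.len_pos e.1

/-- A bridge is an edge whose deletion disconnects the graph. -/
def IsBridge (G : MetricGraph) (e : G.E) : Prop :=
  ¬ (G.deleteEdges {e}).Connected

/-- Contract a set of edges: identify the endpoints of each edge of `F` and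
remove the edges of `F`. -/
def contractEdges (G : MetricGraph) (F : Set G.E) : MetricGraph where
  V := Quot (fun u v : G.V => ∃ e ∈ F, G.s e = u ∧ G.t e = v)
  E := {e : G.E // e ∉ F}
  fintV := Fintype.ofFinite _
  fintE := Fintype.ofFinite _
  s e := Quot.mk _ (G.s e.1)
  t e := Quot.mk _ (G.t e.1)
  len e := G.len e.1
  len_pos e := G.len_pos e.1

/-- The subgraph induced on a set of vertices (with all edges joining them). -/
def inducedOn (G : MetricGraph) (S : Set G.V) : MetricGraph where
  V := {v : G.V // v ∈ S}
  E := {e : G.E // G.s e ∈ S ∧ G.t e ∈ S}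
  fintV := Fintype.ofFinite _
  fintE := Fintype.ofFinite _
  s e := ⟨G.s e.1, e.2.1⟩
  t e := ⟨G.t e.1, e.2.2⟩
  len e := G.len e.1
  len_pos e := G.len_pos e.1

/-- The connected component of a vertex, as a set of vertices. -/
def componentOf (G : MetricGraph) (v : G.V) : Set G.V := {u : G.V | G.Reach v u}

/-- The Jacobian polynomial of a metric graph: the sum, over all `g`-element
sets `C` of edges whose complement is a spanning tree, of the product of the
lengths of the edges of `C`. -/
def jacPoly (G : MetricGraph) : ℝ :=
  ∑ C : Finset G.E,
    if (C.card : ℤ) = G.genus ∧ (G.deleteEdges (↑C)).IsTree then ∏ e ∈ C, G.len e else 0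

end MetricGraph

/-- A harmonic double cover of metric graphs, encoded by the projection
together with its deck involution.  A vertex or edge downstairs is *dilated*
if its fiber is a single (involution-fixed) point; dilated edges have
half the length of their image. -/
structure DoubleCover (Gt G : MetricGraph) where
  πV : Gt.V → G.V
  πE : Gt.E → G.E
  ιV : Gt.V → Gt.V
  ιE : Gt.E → Gt.E
  ιV_invol : ∀ w, ιV (ιV w) = w
  ιE_invol : ∀ f, ιE (ιE f) = f
  πV_ι : ∀ w, πV (ιV w) = πV w
  πE_ι : ∀ f, πE (ιE f) = πE f
  s_comm : ∀ f, G.s (πE f) = πV (Gt.s f)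
  t_comm : ∀ f, G.t (πE f) = πV (Gt.t f)
  s_ι : ∀ f, Gt.s (ιE f) = ιV (Gt.s f)
  t_ι : ∀ f, Gt.t (ιE f) = ιV (Gt.t f)
  πV_surj : Function.Surjective πV
  πE_surj : Function.Surjective πE
  fiberV : ∀ w w', πV w' = πV w → w' = w ∨ w' = ιV w
  fiberE : ∀ f f', πE f' = πE f → f' = f ∨ f' = ιE f
  len_eq : ∀ f, Gt.len f = if ιE f = f then G.len (πE f) / 2 else G.len (πE f)

namespace DoubleCover

variable {Gt G : MetricGraph} (dc : DoubleCover Gt G)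

/-- A vertex of the base is dilated if it has a unique (involution-fixed) preimage. -/
def dilatedV (v : G.V) : Prop := ∃ w, dc.πV w = v ∧ dc.ιV w = w

/-- An edge of the base is dilated if it has a unique (involution-fixed) preimage. -/
def dilatedE (e : G.E) : Prop := ∃ f, dc.πE f = e ∧ dc.ιE f = f

/-- A double cover is free if it has no dilated vertices (hence no dilated edges). -/
def IsFree : Prop := ∀ v : G.V, ¬ dc.dilatedV v

/-- A double cover is dilated if it has a dilated vertex. -/
def IsDilated : Prop := ∃ v : G.V, dc.dilatedV v

/-- A double cover is edge-free if its dilation subgraph consists of isolated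
vertices only, i.e. there are no dilated edges. -/
def IsEdgeFree : Prop := ∀ e : G.E, ¬ dc.dilatedE e

/-- The dilation subgraph: the subgraph of the base consisting of all dilated
vertices and dilated edges. -/
def dilSubgraph : MetricGraph where
  V := {v : G.V // dc.dilatedV v}
  E := {e : G.E // dc.dilatedE e}
  fintV := Fintype.ofFinite _
  fintE := Fintype.ofFinite _
  s e := ⟨G.s e.1, by
    obtain ⟨f, hf, hfix⟩ := e.2
    exact ⟨Gt.s f, by rw [← hf, dc.s_comm], by rw [← dc.s_ι, hfix]⟩⟩
  t e := ⟨G.t e.1, by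
    obtain ⟨f, hf, hfix⟩ := e.2
    exact ⟨Gt.t f, by rw [← hf, dc.t_comm], by rw [← dc.t_ι, hfix]⟩⟩
  len e := G.len e.1
  len_pos e := G.len_pos e.1

/-- The number of dilated edges. -/
def md : ℕ := Nat.card {e : G.E // dc.dilatedE e}

/-- The number of dilated vertices. -/
def nd : ℕ := Nat.card {v : G.V // dc.dilatedV v}

/-- The number of connected components of the dilation subgraph. -/
def numDilComponents : ℕ := dc.dilSubgraph.numComponents

/-- The connected component of `v` in `Γ ∖ F` has connected preimage in `Γ̃ ∖ π⁻¹(F)`. -/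
def hasConnPreimage (F : Set G.E) (v : G.V) : Prop :=
  ((Gt.deleteEdges (dc.πE ⁻¹' F)).inducedOn
    {w : Gt.V | dc.πV w ∈ (G.deleteEdges F).componentOf v}).Connected

/-- An ogod (odd genus one decomposition): a set of `h = g(Γ̃) - g(Γ)` undilated
edges of the base such that every connected component of the complement has
connected preimage. -/
def IsOgod (F : Finset G.E) : Prop :=
  (F.card : ℤ) = Gt.genus - G.genus ∧
  (∀ e ∈ F, ¬ dc.dilatedE e) ∧
  ∀ v : G.V, dc.hasConnPreimage (↑F) v

/-- The rank of an ogod: the number of connected components of `Γ ∖ F`. -/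
def rank (_π : DoubleCover Gt G) (F : Finset G.E) : ℕ := (G.deleteEdges (↑F)).numComponents

/-- The Prym polynomial of a double cover. -/
def prymPoly : ℝ :=
  ∑ F : Finset G.E,
    if dc.IsOgod F then (4 : ℝ) ^ (dc.rank F - 1) * ∏ e ∈ F, G.len e else 0

end DoubleCover

namespace MetricGraph

/-- The vertex set of the connected component of `v` in `Γ ∖ F`. -/
def compV (G : MetricGraph) (F : Set G.E) (v : G.V) : Set G.V :=
  (G.deleteEdges F).componentOf v

/-- The edge set of the connected component of `v` in `Γ ∖ F`. -/
def compE (G : MetricGraph) (F : Set G.E) (v : G.V) : Set G.E :=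
  {e : G.E | e ∉ F ∧ G.s e ∈ G.compV F v ∧ G.t e ∈ G.compV F v}

/-- The genus of the connected component of `v` in `Γ ∖ F`. -/
def compGenus (G : MetricGraph) (F : Set G.E) (v : G.V) : ℤ :=
  (Nat.card (G.compE F v) : ℤ) - (Nat.card (G.compV F v) : ℤ) + 1

end MetricGraph

namespace DoubleCover

variable {Gt G : MetricGraph} (dc : DoubleCover Gt G)

/-- Adjacency within the dilation subgraph. -/
def dilAdj (u v : G.V) : Prop :=
  ∃ e : G.E, dc.dilatedE e ∧ ((G.s e = u ∧ G.t e = v) ∨ (G.s e = v ∧ G.t e = u))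

/-- Reachability within the dilation subgraph. -/
def dilReach : G.V → G.V → Prop := Relation.ReflTransGen dc.dilAdj

/-- The genus of the connected component of the dilation subgraph containing
the dilated vertex `w`. -/
def dilCompGenus (w : G.V) : ℤ :=
  (Nat.card ({e : G.E | dc.dilatedE e ∧ G.s e ∈ {u : G.V | dc.dilReach w u}}) : ℤ)
    - (Nat.card ({u : G.V | dc.dilReach w u}) : ℤ) + 1

/-- Condition (1) of Lemma `lemma:ogods`: the component of `v` in `Γ ∖ F`
contains a unique connected component of the dilation subgraph, and its genus
equals the genus of that component. -/
def ogodCondDil (F : Set G.E) (v : G.V) : Prop :=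
  ∃ w : G.V, dc.dilatedV w ∧ w ∈ G.compV F v ∧
    (∀ w' : G.V, dc.dilatedV w' → w' ∈ G.compV F v → dc.dilReach w w') ∧
    G.compGenus F v = dc.dilCompGenus w

/-- Condition (2) of Lemma `lemma:ogods`: the component of `v` in `Γ ∖ F` has no
dilated vertices or edges, has genus one, and has connected preimage in `Γ̃`. -/
def ogodCondFree (F : Set G.E) (v : G.V) : Prop :=
  (∀ u ∈ G.compV F v, ¬ dc.dilatedV u) ∧
  (∀ e ∈ G.compE F v, ¬ dc.dilatedE e) ∧
  G.compGenus F v = 1 ∧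
  dc.hasConnPreimage F v

end DoubleCover



/-! ### Auxiliary lemmas -/

section Counting


variable {α β γ : Type}

lemma nat_card_sigma [Fintype β] (P : β → Type) [∀ b, Fintype (P b)] :
    Nat.card (Σ b, P b) = ∑ b : β, Nat.card (P b) := by
  rw [Nat.card_eq_fintype_card, Fintype.card_sigma]
  exact Finset.sum_congr rfl (fun b _ => (Nat.card_eq_fintype_card).symm)

lemma nat_card_eq_sum_fibers [Fintype α] [Fintype β] (g : α → β) :
    Nat.card α = ∑ b : β, Nat.card {a : α // g a = b} :=
  calc Nat.card α = Nat.card (Σ b, {a : α // g a = b}) :=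
        (Nat.card_congr (Equiv.sigmaFiberEquiv g)).symm
    _ = ∑ b : β, Nat.card {a : α // g a = b} := nat_card_sigma _

lemma nat_card_fiber_comp [Fintype α] [Fintype β] [Fintype γ] (f : α → β) (g : β → γ) (c : γ) :
    Nat.card {a : α // g (f a) = c} =
      ∑ b : {b : β // g b = c}, Nat.card {a : α // f a = b.1} := by
  rw [nat_card_eq_sum_fibers (fun a : {a : α // g (f a) = c} => (⟨f a.1, a.2⟩ : {b : β // g b = c}))]
  apply Finset.sum_congr rfl
  intro b _
  apply Nat.card_congr
  refine ⟨fun x => ⟨x.1.1, congrArg Subtype.val x.2⟩,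
          fun y => ⟨⟨y.1, by rw [y.2]; exact b.2⟩, Subtype.ext y.2⟩, ?_, ?_⟩
  · intro x; apply Subtype.ext; apply Subtype.ext; rfl
  · intro y; apply Subtype.ext; rfl

lemma nat_card_split [Fintype α] (P Q : α → Prop) :
    Nat.card {a : α // P a} = Nat.card {a : α // P a ∧ Q a} + Nat.card {a : α // P a ∧ ¬ Q a} := by
  rw [← Nat.card_sum]
  apply Nat.card_congr
  refine ⟨fun a => if h : Q a.1 then .inl ⟨a.1, a.2, h⟩ else .inr ⟨a.1, a.2, h⟩,
          fun x => Sum.rec (fun a => ⟨a.1, a.2.1⟩) (fun a => ⟨a.1, a.2.1⟩) x, ?_, ?_⟩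
  · intro a; dsimp only; split <;> rfl
  · rintro (a | a)
    · dsimp only; rw [dif_pos a.2.2]
    · dsimp only; rw [dif_neg a.2.2]

lemma nat_card_fiber_invol [Fintype α] (π : α → β) (ι : α → α)
    (hι : ∀ a, ι (ι a) = a) (hπ : ∀ a, π (ι a) = π a)
    (hsurj : Function.Surjective π) (hfib : ∀ a a', π a' = π a → a' = a ∨ a' = ι a) (b : β) :
    Nat.card {a : α // π a = b} = if ∃ a, π a = b ∧ ι a = a then 1 else 2 := by
  obtain ⟨a0, ha0⟩ := hsurj b
  split_ifs with h
  · obtain ⟨a, ha, hfix⟩ := h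
    rw [Nat.card_eq_one_iff_exists]
    refine ⟨⟨a, ha⟩, fun y => Subtype.ext ?_⟩
    rcases hfib a y.1 (y.2.trans ha.symm) with h' | h'
    · exact h'
    · rw [hfix] at h'; exact h'
  · have hfix : ι a0 ≠ a0 := fun hf => h ⟨a0, ha0, hf⟩
    rw [Nat.card_eq_two_iff]
    refine ⟨⟨a0, ha0⟩, ⟨ι a0, by rw [hπ]; exact ha0⟩,
      fun he => hfix (congrArg Subtype.val he).symm, ?_⟩
    apply Set.eq_univ_of_forall
    intro y
    rcases hfib a0 y.1 (y.2.trans ha0.symm) with h' | h'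
    · exact Set.mem_insert_iff.2 (Or.inl (Subtype.ext h'))
    · exact Set.mem_insert_iff.2 (Or.inr (Set.mem_singleton_iff.2 (Subtype.ext h')))

lemma nat_card_ite [Fintype α] (P : α → Prop) :
    Nat.card {a : α // P a} = ∑ a : α, if P a then 1 else 0 := by
  rw [Nat.card_eq_fintype_card, Fintype.card_subtype, Finset.card_filter]

lemma nat_card_invol_total [Fintype α] [Fintype β] (π : α → β) (ι : α → α)
    (hι : ∀ a, ι (ι a) = a) (hπ : ∀ a, π (ι a) = π a)
    (hsurj : Function.Surjective π) (hfib : ∀ a a', π a' = π a → a' = a ∨ a' = ι a) :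
    Nat.card α + Nat.card {b : β // ∃ a, π a = b ∧ ι a = a} = 2 * Nat.card β := by
  rw [nat_card_eq_sum_fibers π, nat_card_ite, ← Finset.sum_add_distrib]
  trans (∑ _b : β, 2)
  · apply Finset.sum_congr rfl
    intro b _
    rw [nat_card_fiber_invol π ι hι hπ hsurj hfib]
    split_ifs <;> rfl
  · rw [Finset.sum_const, Finset.card_univ, smul_eq_mul, mul_comm, Nat.card_eq_fintype_card]

end Counting


namespace MetricGraph

variable {G : MetricGraph}

lemma Adj.symm' {u v : G.V} (h : G.Adj u v) : G.Adj v u := by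
  obtain ⟨e, h⟩ := h; exact ⟨e, h.symm⟩

lemma Reach.symm' {u v : G.V} (h : G.Reach u v) : G.Reach v u :=
  haveI : Std.Symm G.Adj := ⟨fun _ _ h => Adj.symm' h⟩
  (Relation.ReflTransGen.stdSymm : Std.Symm (Relation.ReflTransGen G.Adj)).symm _ _ h

lemma reach_equivalence (G : MetricGraph) : Equivalence G.Reach :=
  ⟨fun _ => .refl, Reach.symm', Relation.ReflTransGen.trans⟩

def stepN (G : MetricGraph) : ℕ → G.V → G.V → Prop
  | 0, u, v => u = v
  | n+1, u, v => ∃ x, G.stepN n u x ∧ G.Adj x v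

lemma reach_iff_stepN {u v : G.V} : G.Reach u v ↔ ∃ n, G.stepN n u v := by
  constructor
  · intro h
    induction h with
    | refl => exact ⟨0, rfl⟩
    | tail _ hadj ih => obtain ⟨n, hn⟩ := ih; exact ⟨n+1, _, hn, hadj⟩
  · rintro ⟨n, hn⟩
    induction n generalizing v with
    | zero => cases hn; exact .refl
    | succ n ih => obtain ⟨x, hx, hadj⟩ := hn; exact (ih hx).tail hadj

lemma card_le_of_connected (G : MetricGraph) (h : G.Connected) :
    Fintype.card G.V ≤ Fintype.card G.E + 1 := by
  obtain ⟨⟨r⟩, hall⟩ := h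
  set d : G.V → ℕ := fun v => Nat.find (reach_iff_stepN.1 (hall r v)) with hd
  have hdspec : ∀ v, G.stepN (d v) r v := fun v => Nat.find_spec (reach_iff_stepN.1 (hall r v))
  have key : ∀ v : G.V, v ≠ r → ∃ e x,
      ((G.s e = x ∧ G.t e = v) ∨ (G.s e = v ∧ G.t e = x)) ∧ d x < d v := by
    intro v hv
    have hn := hdspec v
    rcases hdn : d v with _ | m
    · rw [hdn] at hn; exact absurd hn.symm hv
    · rw [hdn] at hn
      obtain ⟨x, hx, e, he⟩ := hn
      refine ⟨e, x, he, ?_⟩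
      have : d x ≤ m := Nat.find_min' _ hx
      omega
  set f : {v : G.V // v ≠ r} → G.E := fun v => Classical.choose (key v.1 v.2) with hf
  have hfspec : ∀ v : {v : G.V // v ≠ r}, ∃ x,
      ((G.s (f v) = x ∧ G.t (f v) = v.1) ∨ (G.s (f v) = v.1 ∧ G.t (f v) = x)) ∧ d x < d v.1 :=
    fun v => Classical.choose_spec (key v.1 v.2)
  have hinj : Function.Injective f := by
    intro v1 v2 heq
    obtain ⟨x1, h1, hd1⟩ := hfspec v1
    obtain ⟨x2, h2, hd2⟩ := hfspec v2
    rw [heq] at h1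
    apply Subtype.ext
    by_contra hne
    rcases h1 with ⟨hs1, ht1⟩ | ⟨hs1, ht1⟩ <;> rcases h2 with ⟨hs2, ht2⟩ | ⟨hs2, ht2⟩
    · exact hne (ht1.symm.trans ht2)
    · have e1 : x1 = v2.1 := hs1.symm.trans hs2
      have e2 : x2 = v1.1 := ht2.symm.trans ht1
      rw [e1] at hd1; rw [e2] at hd2; omega
    · have e1 : x1 = v2.1 := ht1.symm.trans ht2
      have e2 : x2 = v1.1 := hs2.symm.trans hs1
      rw [e1] at hd1; rw [e2] at hd2; omega
    · exact hne (hs1.symm.trans hs2)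
  have := Fintype.card_le_of_injective f hinj
  have h1 : Fintype.card {v : G.V // v ≠ r} = Fintype.card G.V - 1 := by
    rw [Fintype.card_subtype_compl, Fintype.card_subtype_eq]
  have h2 : 0 < Fintype.card G.V := Fintype.card_pos_iff.2 ⟨r⟩
  omega

lemma deleteEdges_adj {F : Set G.E} {u v : G.V} :
    (G.deleteEdges F).Adj u v ↔
      ∃ e : G.E, e ∉ F ∧ ((G.s e = u ∧ G.t e = v) ∨ (G.s e = v ∧ G.t e = u)) := by
  constructor
  · rintro ⟨⟨e, he⟩, h⟩; exact ⟨e, he, h⟩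
  · rintro ⟨e, he, h⟩; exact ⟨⟨e, he⟩, h⟩

lemma adj_inducedOn {G : MetricGraph} {S : Set G.V} {e : G.E} {a b : {v : G.V // v ∈ S}}
    (h : (G.s e = a.1 ∧ G.t e = b.1) ∨ (G.s e = b.1 ∧ G.t e = a.1)) :
    (G.inducedOn S).Adj a b := by
  have hs : G.s e ∈ S := by
    rcases h with ⟨h1, _⟩ | ⟨h1, _⟩
    · rw [h1]; exact a.2
    · rw [h1]; exact b.2
  have ht : G.t e ∈ S := by
    rcases h with ⟨_, h2⟩ | ⟨_, h2⟩
    · rw [h2]; exact b.2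
    · rw [h2]; exact a.2
  refine ⟨⟨e, hs, ht⟩, ?_⟩
  rcases h with ⟨h1, h2⟩ | ⟨h1, h2⟩
  · exact Or.inl ⟨Subtype.ext h1, Subtype.ext h2⟩
  · exact Or.inr ⟨Subtype.ext h1, Subtype.ext h2⟩

lemma mem_compV_self (G : MetricGraph) (F : Set G.E) (v : G.V) : v ∈ G.compV F v :=
  Relation.ReflTransGen.refl

lemma mem_compV_iff {F : Set G.E} {v u : G.V} :
    u ∈ G.compV F v ↔ (G.deleteEdges F).Reach v u := Iff.rfl

lemma compV_closed {F : Set G.E} {v u x : G.V} (hu : u ∈ G.compV F v)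
    (h : (G.deleteEdges F).Reach u x) : x ∈ G.compV F v :=
  Relation.ReflTransGen.trans hu h

lemma compV_eq_of_reach {F : Set G.E} {v u : G.V} (h : (G.deleteEdges F).Reach v u) :
    G.compV F v = G.compV F u := by
  ext x
  constructor
  · intro hx; exact Relation.ReflTransGen.trans (Reach.symm' h) hx
  · intro hx; exact Relation.ReflTransGen.trans h hx

end MetricGraph

namespace DoubleCover

variable {Gt G : MetricGraph} (dc : DoubleCover Gt G)

lemma dilatedV_s {e : G.E} (h : dc.dilatedE e) : dc.dilatedV (G.s e) := by
  obtain ⟨f, hf, hfix⟩ := h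
  exact ⟨Gt.s f, by rw [← hf, dc.s_comm], by rw [← dc.s_ι, hfix]⟩

lemma dilatedV_t {e : G.E} (h : dc.dilatedE e) : dc.dilatedV (G.t e) := by
  obtain ⟨f, hf, hfix⟩ := h
  exact ⟨Gt.t f, by rw [← hf, dc.t_comm], by rw [← dc.t_ι, hfix]⟩

lemma dilAdj_symm {u v : G.V} (h : dc.dilAdj u v) : dc.dilAdj v u := by
  obtain ⟨e, he, h⟩ := h; exact ⟨e, he, h.symm⟩

lemma dilReach_symm {u v : G.V} (h : dc.dilReach u v) : dc.dilReach v u :=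
  haveI : Std.Symm dc.dilAdj := ⟨fun _ _ h => dc.dilAdj_symm h⟩
  (Relation.ReflTransGen.stdSymm : Std.Symm (Relation.ReflTransGen dc.dilAdj)).symm _ _ h

lemma dilReach_equivalence : Equivalence dc.dilReach :=
  ⟨fun _ => .refl, dc.dilReach_symm, Relation.ReflTransGen.trans⟩

lemma dilatedV_of_dilAdj {u x : G.V} (h : dc.dilAdj u x) : dc.dilatedV u := by
  obtain ⟨e, he, h⟩ := h
  rcases h with ⟨h1, _⟩ | ⟨_, h2⟩
  · rw [← h1]; exact dc.dilatedV_s he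
  · rw [← h2]; exact dc.dilatedV_t he

lemma dilReach_eq_of_undilated {u x : G.V} (hu : ¬ dc.dilatedV u) (h : dc.dilReach u x) :
    x = u := by
  induction h using Relation.ReflTransGen.head_induction_on with
  | refl => rfl
  | head hadj _ _ => exact absurd (dc.dilatedV_of_dilAdj hadj) hu

lemma dilatedV_of_dilReach {u x : G.V} (hu : dc.dilatedV u) (h : dc.dilReach u x) :
    dc.dilatedV x := by
  induction h with
  | refl => exact hu
  | tail _ hadj ih => exact dc.dilatedV_of_dilAdj (dc.dilAdj_symm hadj)

lemma dilReach_to_reach {F : Set G.E} (hF : ∀ e, dc.dilatedE e → e ∉ F) {u x : G.V}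
    (h : dc.dilReach u x) : (G.deleteEdges F).Reach u x := by
  induction h with
  | refl => exact .refl
  | tail _ hadj ih =>
      obtain ⟨e, he, hor⟩ := hadj
      exact ih.tail (MetricGraph.deleteEdges_adj.2 ⟨e, hF e he, hor⟩)

lemma exists_lift_s {e : G.E} {f : Gt.E} {w : Gt.V} (hf : dc.πE f = e)
    (hw : dc.πV (Gt.s f) = dc.πV w) : ∃ f', dc.πE f' = e ∧ Gt.s f' = w := by
  rcases dc.fiberV w (Gt.s f) hw with h | h
  · exact ⟨f, hf, h⟩
  · exact ⟨dc.ιE f, by rw [dc.πE_ι, hf], by rw [dc.s_ι, h, dc.ιV_invol]⟩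

lemma exists_lift_t {e : G.E} {f : Gt.E} {w : Gt.V} (hf : dc.πE f = e)
    (hw : dc.πV (Gt.t f) = dc.πV w) : ∃ f', dc.πE f' = e ∧ Gt.t f' = w := by
  rcases dc.fiberV w (Gt.t f) hw with h | h
  · exact ⟨f, hf, h⟩
  · exact ⟨dc.ιE f, by rw [dc.πE_ι, hf], by rw [dc.t_ι, h, dc.ιV_invol]⟩

lemma lift_adj {F : Set G.E} {u x : G.V} (h : (G.deleteEdges F).Adj u x) {w : Gt.V}
    (hw : dc.πV w = u) :
    ∃ w', dc.πV w' = x ∧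
      ∃ f : Gt.E, dc.πE f ∉ F ∧
        ((Gt.s f = w ∧ Gt.t f = w') ∨ (Gt.s f = w' ∧ Gt.t f = w)) := by
  obtain ⟨e, he, hor⟩ := MetricGraph.deleteEdges_adj.1 h
  obtain ⟨f, hf⟩ := dc.πE_surj e
  rcases hor with ⟨hs, ht⟩ | ⟨hs, ht⟩
  · have : dc.πV (Gt.s f) = dc.πV w := by rw [← dc.s_comm, hf, hs, hw]
    obtain ⟨f', hf', hsf'⟩ := dc.exists_lift_s hf this
    refine ⟨Gt.t f', ?_, f', by rw [hf']; exact he, Or.inl ⟨hsf', rfl⟩⟩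
    rw [← dc.t_comm, hf', ht]
  · have : dc.πV (Gt.t f) = dc.πV w := by rw [← dc.t_comm, hf, ht, hw]
    obtain ⟨f', hf', htf'⟩ := dc.exists_lift_t hf this
    refine ⟨Gt.s f', ?_, f', by rw [hf']; exact he, Or.inr ⟨rfl, htf'⟩⟩
    rw [← dc.s_comm, hf', hs]

lemma lift_reach {F : Set G.E} {v u x : G.V} (hu : u ∈ G.compV F v)
    (hreach : (G.deleteEdges F).Reach u x) (w : Gt.V) (hw : dc.πV w = u) :
    ∃ w', ∃ h2 : dc.πV w' ∈ G.compV F v,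
      ((Gt.deleteEdges (dc.πE ⁻¹' F)).inducedOn
          {w : Gt.V | dc.πV w ∈ (G.deleteEdges F).componentOf v}).Reach
        ⟨w, show dc.πV w ∈ (G.deleteEdges F).componentOf v by rw [hw]; exact hu⟩ ⟨w', h2⟩ ∧ dc.πV w' = x := by
  induction hreach with
  | refl => exact ⟨w, by rw [hw]; exact hu, .refl, hw⟩
  | @tail b c hab hadj ih =>
      obtain ⟨w1, h2, hr, hπ⟩ := ih
      obtain ⟨w2, hw2, f, hfF, hfor⟩ := dc.lift_adj hadj hπ
      have hc : c ∈ G.compV F v := MetricGraph.compV_closed (MetricGraph.compV_closed hu hab) (.tail .refl hadj)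
      have hw2mem : dc.πV w2 ∈ G.compV F v := by rw [hw2]; exact hc
      refine ⟨w2, hw2mem, hr.tail ?_, hw2⟩
      exact MetricGraph.adj_inducedOn (e := (⟨f, hfF⟩ : {f : Gt.E // f ∉ dc.πE ⁻¹' F}))
        (by exact_mod_cast hfor)
      
lemma hasConnPreimage_of_dilated {F : Set G.E} {v z : G.V} (hz : z ∈ G.compV F v)
    (hzd : dc.dilatedV z) : dc.hasConnPreimage F v := by
  obtain ⟨w0, hw0π, hw0fix⟩ := hzd
  have hw0mem : dc.πV w0 ∈ G.compV F v := by rw [hw0π]; exact hz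
  constructor
  · obtain ⟨w, hw⟩ := dc.πV_surj v
    exact ⟨⟨w, show dc.πV w ∈ (G.deleteEdges F).componentOf v by rw [hw]; exact G.mem_compV_self F v⟩⟩
  · have key : ∀ a : {w : Gt.V // dc.πV w ∈ (G.deleteEdges F).componentOf v},
        ((Gt.deleteEdges (dc.πE ⁻¹' F)).inducedOn
          {w : Gt.V | dc.πV w ∈ (G.deleteEdges F).componentOf v}).Reach a ⟨w0, hw0mem⟩ := by
      intro a
      have ha : dc.πV a.1 ∈ G.compV F v := a.2
      have hreach : (G.deleteEdges F).Reach (dc.πV a.1) z :=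
        Relation.ReflTransGen.trans (MetricGraph.Reach.symm' ha) hz
      obtain ⟨w', h2, hr, hπ⟩ := dc.lift_reach ha hreach a.1 rfl
      have : w' = w0 := by
        rcases dc.fiberV w0 w' (by rw [hπ, hw0π]) with h | h
        · exact h
        · rw [hw0fix] at h; exact h
      subst this
      exact hr
    intro a b
    exact Relation.ReflTransGen.trans (key a) (MetricGraph.Reach.symm' (key b))

end DoubleCover


section Components

namespace MetricGraph

variable {G : MetricGraph}

lemma compGenus_congr {F : Set G.E} {v u : G.V} (h : G.compV F v = G.compV F u) :
    G.compGenus F v = G.compGenus F u := by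
  unfold compGenus compE
  rw [h]

def Qc (G : MetricGraph) (F : Finset G.E) : Type := Quot (G.deleteEdges (↑F : Set G.E)).Reach

noncomputable instance (G : MetricGraph) (F : Finset G.E) : Fintype (G.Qc F) :=
  @Fintype.ofFinite _ (Quot.finite _)

def cmk (G : MetricGraph) (F : Finset G.E) (v : G.V) : G.Qc F := Quot.mk _ v

lemma cmk_surjective (G : MetricGraph) (F : Finset G.E) : Function.Surjective (G.cmk F) :=
  Quot.mk_surjective

lemma cmk_eq_iff {F : Finset G.E} {u v : G.V} :
    G.cmk F u = G.cmk F v ↔ (G.deleteEdges (↑F : Set G.E)).Reach u v :=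
  ((G.deleteEdges (↑F : Set G.E)).reach_equivalence).quot_mk_eq_iff u v

lemma cmk_out_eq {F : Finset G.E} (q : G.Qc F) : G.cmk F q.out = q := Quot.out_eq q

lemma mem_compV_iff_cmk {F : Finset G.E} {v u : G.V} :
    u ∈ G.compV (↑F) v ↔ G.cmk F u = G.cmk F v := by
  rw [cmk_eq_iff]
  exact ⟨fun h => Reach.symm' h, fun h => Reach.symm' h⟩

end MetricGraph

namespace DoubleCover

variable {Gt G : MetricGraph} (dc : DoubleCover Gt G)

lemma rd_equiv : Equivalence (fun x y : {v : G.V // dc.dilatedV v} => dc.dilReach x.1 y.1) :=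
  ⟨fun _ => .refl, fun h => dc.dilReach_symm h, fun h h' => h.trans h'⟩

def Qd : Type := Quot (fun x y : {v : G.V // dc.dilatedV v} => dc.dilReach x.1 y.1)

noncomputable instance : Fintype dc.Qd := @Fintype.ofFinite _ (Quot.finite _)

def dmk (x : {v : G.V // dc.dilatedV v}) : dc.Qd := Quot.mk _ x

lemma dmk_surjective : Function.Surjective dc.dmk := Quot.mk_surjective

lemma dmk_eq_iff {x y : {v : G.V // dc.dilatedV v}} :
    dc.dmk x = dc.dmk y ↔ dc.dilReach x.1 y.1 :=
  (dc.rd_equiv).quot_mk_eq_iff x y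

lemma dilReach_out_dmk (x : {v : G.V // dc.dilatedV v}) :
    dc.dilReach ((dc.dmk x).out).1 x.1 := by
  rw [← dc.dmk_eq_iff]
  show dc.dmk (Quot.out (dc.dmk x)) = dc.dmk x
  exact Quot.out_eq _

lemma dilCompGenus_congr {w w' : G.V} (h : dc.dilReach w w') :
    dc.dilCompGenus w = dc.dilCompGenus w' := by
  have hset : {u : G.V | dc.dilReach w u} = {u : G.V | dc.dilReach w' u} :=
    Set.ext fun u => ⟨fun hu => (dc.dilReach_symm h).trans hu, fun hu => h.trans hu⟩
  unfold dilCompGenus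
  rw [hset]

lemma hasConnPreimage_congr {F : Set G.E} {v u : G.V} (h : G.compV F v = G.compV F u) :
    dc.hasConnPreimage F v ↔ dc.hasConnPreimage F u := by
  unfold hasConnPreimage
  rw [show (G.deleteEdges F).componentOf v = (G.deleteEdges F).componentOf u from h]

def phi (F : Finset G.E) (hF : ∀ e, dc.dilatedE e → e ∉ F) : dc.Qd → G.Qc F :=
  Quot.lift (fun x => G.cmk F x.1)
    (fun _ _ hxy => Quot.sound (dc.dilReach_to_reach
      (fun e he hef => hF e he (Finset.mem_coe.1 hef)) hxy))

lemma phi_dmk (F : Finset G.E) (hF : ∀ e, dc.dilatedE e → e ∉ F)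
    (x : {v : G.V // dc.dilatedV v}) : dc.phi F hF (dc.dmk x) = G.cmk F x.1 := rfl

def emk (e : {e : G.E // dc.dilatedE e}) : dc.Qd :=
  dc.dmk ⟨G.s e.1, dc.dilatedV_s e.2⟩

/-- Fibers of `dmk` are the vertex sets of dilation components. -/
def fiberDmkEquiv (D : dc.Qd) :
    {x : {v : G.V // dc.dilatedV v} // dc.dmk x = D} ≃ {u : G.V | dc.dilReach D.out.1 u} where
  toFun x := ⟨x.1.1, by
    show dc.dilReach D.out.1 x.1.1
    have : dc.dmk x.1 = dc.dmk D.out := by rw [x.2]; exact (Quot.out_eq D).symm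
    exact dc.dilReach_symm (dc.dmk_eq_iff.1 this)⟩
  invFun u := ⟨⟨u.1, dc.dilatedV_of_dilReach D.out.2 u.2⟩, by
    have : dc.dmk ⟨u.1, dc.dilatedV_of_dilReach D.out.2 u.2⟩ = dc.dmk D.out :=
      dc.dmk_eq_iff.2 (dc.dilReach_symm u.2)
    rw [this]; exact Quot.out_eq D⟩
  left_inv x := by apply Subtype.ext; apply Subtype.ext; rfl
  right_inv u := by apply Subtype.ext; rfl

/-- Fibers of `emk` are the edge sets of dilation components. -/
def fiberEmkEquiv (D : dc.Qd) :
    {e : {e : G.E // dc.dilatedE e} // dc.emk e = D} ≃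
      {e : G.E | dc.dilatedE e ∧ G.s e ∈ {u : G.V | dc.dilReach D.out.1 u}} where
  toFun e := ⟨e.1.1, ⟨e.1.2, by
    have : dc.dmk ⟨G.s e.1.1, dc.dilatedV_s e.1.2⟩ = dc.dmk D.out := by
      rw [show dc.dmk ⟨G.s e.1.1, dc.dilatedV_s e.1.2⟩ = dc.emk e.1 from rfl, e.2]
      exact (Quot.out_eq D).symm
    exact dc.dilReach_symm (dc.dmk_eq_iff.1 this)⟩⟩
  invFun e := ⟨⟨e.1, e.2.1⟩, by
    show dc.dmk ⟨G.s e.1, dc.dilatedV_s e.2.1⟩ = D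
    have : dc.dmk ⟨G.s e.1, dc.dilatedV_s e.2.1⟩ = dc.dmk D.out :=
      dc.dmk_eq_iff.2 (dc.dilReach_symm e.2.2)
    rw [this]; exact Quot.out_eq D⟩
  left_inv e := by apply Subtype.ext; apply Subtype.ext; rfl
  right_inv e := by apply Subtype.ext; rfl

end DoubleCover

end Components


section Inequalities

namespace DoubleCover

variable {Gt G : MetricGraph} (dc : DoubleCover Gt G)

/-- The key inequality for a component containing dilation subgraph components:
contract each dilation component and count. -/
lemma comp_quot_ineq (F : Finset G.E) (hF : ∀ e, dc.dilatedE e → e ∉ F) (v : G.V) :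
    Nat.card {u : G.V // u ∈ G.compV (↑F) v ∧ ¬ dc.dilatedV u}
      + Nat.card {D : dc.Qd // dc.phi F hF D = G.cmk F v}
    ≤ Nat.card {e : G.E // e ∈ G.compE (↑F) v ∧ ¬ dc.dilatedE e} + 1 := by
  classical
  set Vq := {u : G.V // u ∈ G.compV (↑F) v} with hVq
  set Rq := fun x y : Vq => dc.dilReach x.1 y.1 with hRq
  set CG : MetricGraph :=
    { V := Quot Rq
      E := {e : G.E // e ∈ G.compE (↑F) v ∧ ¬ dc.dilatedE e}
      fintV := @Fintype.ofFinite _ (Quot.finite _)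
      fintE := Fintype.ofFinite _
      s := fun e => Quot.mk Rq ⟨G.s e.1, e.2.1.2.1⟩
      t := fun e => Quot.mk Rq ⟨G.t e.1, e.2.1.2.2⟩
      len := fun _ => 1
      len_pos := fun _ => one_pos } with hCG
  have hconn : CG.Connected := by
    have base : ∀ u (hu : (G.deleteEdges (↑F : Set G.E)).Reach v u),
        CG.Reach (Quot.mk Rq ⟨v, G.mem_compV_self (↑F) v⟩) (Quot.mk Rq ⟨u, hu⟩) := by
      intro u hu
      induction hu with
      | refl => exact .refl
      | @tail b c hab hbc ih =>
          obtain ⟨e, he, hor⟩ := MetricGraph.deleteEdges_adj.1 hbc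
          have hbmem : b ∈ G.compV (↑F) v := hab
          have hcmem : c ∈ G.compV (↑F) v := hab.tail hbc
          by_cases hde : dc.dilatedE e
          · have hrel : Rq ⟨b, hbmem⟩ ⟨c, hcmem⟩ := by
              show dc.dilReach b c
              exact Relation.ReflTransGen.single ⟨e, hde, hor⟩
            have : Quot.mk Rq ⟨b, hbmem⟩ = Quot.mk Rq ⟨c, hcmem⟩ := Quot.sound hrel
            exact this ▸ ih
          · have hsmem : G.s e ∈ G.compV (↑F) v := by
              rcases hor with ⟨h1, _⟩ | ⟨h1, _⟩
              · rw [h1]; exact hbmem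
              · rw [h1]; exact hcmem
            have htmem : G.t e ∈ G.compV (↑F) v := by
              rcases hor with ⟨_, h2⟩ | ⟨_, h2⟩
              · rw [h2]; exact hcmem
              · rw [h2]; exact hbmem
            have hadj : CG.Adj (Quot.mk Rq ⟨b, hbmem⟩) (Quot.mk Rq ⟨c, hcmem⟩) := by
              refine ⟨⟨e, ⟨he, hsmem, htmem⟩, hde⟩, ?_⟩
              rcases hor with ⟨h1, h2⟩ | ⟨h1, h2⟩
              · exact Or.inl ⟨congrArg (Quot.mk Rq) (Subtype.ext h1),
                  congrArg (Quot.mk Rq) (Subtype.ext h2)⟩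
              · exact Or.inr ⟨congrArg (Quot.mk Rq) (Subtype.ext h1),
                  congrArg (Quot.mk Rq) (Subtype.ext h2)⟩
            exact ih.tail hadj
    constructor
    · exact ⟨Quot.mk Rq ⟨v, G.mem_compV_self (↑F) v⟩⟩
    · have base' : ∀ x : CG.V, CG.Reach (Quot.mk Rq ⟨v, G.mem_compV_self (↑F) v⟩) x := by
        intro x
        induction x using Quot.ind with
        | _ x => exact base x.1 x.2
      intro x y
      exact (MetricGraph.Reach.symm' (base' x)).trans (base' y)
  have hcard := CG.card_le_of_connected hconn
  -- identify the vertex count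
  have hVcard : Nat.card CG.V =
      Nat.card {u : G.V // u ∈ G.compV (↑F) v ∧ ¬ dc.dilatedV u}
        + Nat.card {D : dc.Qd // dc.phi F hF D = G.cmk F v} := by
    rw [← Nat.card_sum]
    apply Nat.card_congr
    set eqfun : Vq → ({u : G.V // u ∈ G.compV (↑F) v ∧ ¬ dc.dilatedV u}
        ⊕ {D : dc.Qd // dc.phi F hF D = G.cmk F v}) := fun x =>
      if hx : dc.dilatedV x.1 then
        Sum.inr ⟨dc.dmk ⟨x.1, hx⟩, MetricGraph.mem_compV_iff_cmk.1 x.2⟩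
      else Sum.inl ⟨x.1, x.2, hx⟩ with heqfun
    have resp : ∀ x y : Vq, Rq x y → eqfun x = eqfun y := by
      intro x y hxy
      rw [heqfun]
      dsimp only
      by_cases hx : dc.dilatedV x.1
      · have hy : dc.dilatedV y.1 := dc.dilatedV_of_dilReach hx hxy
        rw [dif_pos hx, dif_pos hy]
        exact congrArg _ (Subtype.ext (dc.dmk_eq_iff.2 hxy))
      · have hyx : y.1 = x.1 := dc.dilReach_eq_of_undilated hx hxy
        have hy : ¬ dc.dilatedV y.1 := by rw [hyx]; exact hx
        rw [dif_neg hx, dif_neg hy]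
        exact congrArg _ (Subtype.ext hyx.symm)
    have memout : ∀ D : {D : dc.Qd // dc.phi F hF D = G.cmk F v},
        D.1.out.1 ∈ G.compV (↑F) v := by
      intro D
      apply MetricGraph.mem_compV_iff_cmk.2
      have h1 : dc.phi F hF D.1 = G.cmk F D.1.out.1 := by
        conv_lhs => rw [← Quot.out_eq D.1]
        rfl
      exact h1.symm.trans D.2

    set invf : ({u : G.V // u ∈ G.compV (↑F) v ∧ ¬ dc.dilatedV u}
        ⊕ {D : dc.Qd // dc.phi F hF D = G.cmk F v}) → Quot Rq :=
      Sum.elim (fun u => Quot.mk Rq ⟨u.1, u.2.1⟩)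
        (fun D => Quot.mk Rq ⟨D.1.out.1, memout D⟩) with hinvf
    refine ⟨Quot.lift eqfun resp, invf, ?_, ?_⟩
    · intro x
      induction x using Quot.ind with
      | _ x =>
        show invf (eqfun x) = _
        rw [heqfun]
        by_cases hx : dc.dilatedV x.1
        · dsimp only
          rw [dif_pos hx, hinvf]
          dsimp only [Sum.elim_inr]
          apply Quot.sound
          show dc.dilReach _ _
          exact dc.dilReach_out_dmk ⟨x.1, hx⟩
        · dsimp only
          rw [dif_neg hx, hinvf]
          dsimp only [Sum.elim_inl]
    · rintro (u | D)
      · rw [hinvf]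
        dsimp only [Sum.elim_inl]
        show eqfun _ = _
        rw [heqfun]
        dsimp only
        rw [dif_neg u.2.2]
      · rw [hinvf]
        dsimp only [Sum.elim_inr]
        show eqfun _ = _
        rw [heqfun]
        dsimp only
        rw [dif_pos D.1.out.2]
        apply congrArg
        apply Subtype.ext
        show dc.dmk ⟨D.1.out.1, D.1.out.2⟩ = D.1
        exact Quot.out_eq D.1
  have h1 : Nat.card CG.V = @Fintype.card CG.V CG.fintV := @Nat.card_eq_fintype_card _ CG.fintV
  have h2 : Nat.card CG.E = @Fintype.card CG.E CG.fintE := @Nat.card_eq_fintype_card _ CG.fintE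
  have h3 : Nat.card CG.E = Nat.card {e : G.E // e ∈ G.compE (↑F) v ∧ ¬ dc.dilatedE e} := rfl
  omega

end DoubleCover

end Inequalities


namespace DoubleCover

variable {Gt G : MetricGraph} (dc : DoubleCover Gt G)

lemma nat_card_fiberV (v : G.V) :
    Nat.card {w : Gt.V // dc.πV w = v} = if dc.dilatedV v then 1 else 2 := by
  rw [nat_card_fiber_invol dc.πV dc.ιV dc.ιV_invol dc.πV_ι dc.πV_surj dc.fiberV v]
  split_ifs with h1 h2 h3
  · rfl
  · exact absurd h1 h2
  · exact absurd h3 h1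
  · rfl

lemma nat_card_fiberE (e : G.E) :
    Nat.card {f : Gt.E // dc.πE f = e} = if dc.dilatedE e then 1 else 2 := by
  rw [nat_card_fiber_invol dc.πE dc.ιE dc.ιE_invol dc.πE_ι dc.πE_surj dc.fiberE e]
  split_ifs with h1 h2 h3
  · rfl
  · exact absurd h1 h2
  · exact absurd h3 h1
  · rfl

lemma nat_card_V_total : Nat.card Gt.V + dc.nd = 2 * Nat.card G.V :=
  nat_card_invol_total dc.πV dc.ιV dc.ιV_invol dc.πV_ι dc.πV_surj dc.fiberV

lemma nat_card_E_total : Nat.card Gt.E + dc.md = 2 * Nat.card G.E :=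
  nat_card_invol_total dc.πE dc.ιE dc.ιE_invol dc.πE_ι dc.πE_surj dc.fiberE

end DoubleCover

namespace DoubleCover

variable {Gt G : MetricGraph} (dc : DoubleCover Gt G)

/-- A free component with connected preimage has at least as many edges as vertices. -/
lemma free_comp_ineq (F : Finset G.E) (v : G.V)
    (hfree : ∀ u ∈ G.compV (↑F) v, ¬ dc.dilatedV u)
    (hconn : dc.hasConnPreimage (↑F) v) :
    Nat.card (G.compV (↑F) v) ≤ Nat.card (G.compE (↑F) v) := by
  classical
  set H : MetricGraph := (Gt.deleteEdges (dc.πE ⁻¹' (↑F : Set G.E))).inducedOn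
      {w : Gt.V | dc.πV w ∈ (G.deleteEdges (↑F : Set G.E)).componentOf v} with hH
  have hcard := H.card_le_of_connected hconn
  have hV : Nat.card H.V = 2 * Nat.card (G.compV (↑F) v) := by
    rw [nat_card_eq_sum_fibers (fun w : H.V => (⟨dc.πV w.1, w.2⟩ : {u : G.V // u ∈ G.compV (↑F) v}))]
    have hfib : ∀ u : {u : G.V // u ∈ G.compV (↑F) v},
        Nat.card {w : H.V // (⟨dc.πV w.1, w.2⟩ : {u : G.V // u ∈ G.compV (↑F) v}) = u} = 2 := by
      intro u
      have he : Nat.card {w : H.V // (⟨dc.πV w.1, w.2⟩ : {u : G.V // u ∈ G.compV (↑F) v}) = u}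
          = Nat.card {w : Gt.V // dc.πV w = u.1} := by
        apply Nat.card_congr
        refine ⟨fun x => ⟨x.1.1, congrArg Subtype.val x.2⟩,
          fun y => ⟨⟨y.1, show dc.πV y.1 ∈ (G.deleteEdges (↑F : Set G.E)).componentOf v by
            rw [y.2]; exact u.2⟩, Subtype.ext y.2⟩, ?_, ?_⟩
        · intro x; apply Subtype.ext; apply Subtype.ext; rfl
        · intro y; apply Subtype.ext; rfl
      rw [he, dc.nat_card_fiberV u.1, if_neg (hfree u.1 u.2)]
    refine Eq.trans (Finset.sum_congr rfl (fun u _ => hfib u)) ?_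
    rw [Finset.sum_const, Finset.card_univ, smul_eq_mul, mul_comm, Nat.card_eq_fintype_card]
  have hE : Nat.card H.E = 2 * Nat.card (G.compE (↑F) v) := by
    have hmap : ∀ f : H.E, dc.πE f.1.1 ∈ G.compE (↑F) v := by
      intro f
      refine ⟨fun hc => f.1.2 (Set.mem_preimage.2 hc), ?_, ?_⟩
      · show G.s (dc.πE f.1.1) ∈ _
        rw [dc.s_comm]
        exact f.2.1
      · show G.t (dc.πE f.1.1) ∈ _
        rw [dc.t_comm]
        exact f.2.2
    rw [nat_card_eq_sum_fibers (fun f : H.E => (⟨dc.πE f.1.1, hmap f⟩ : {e : G.E // e ∈ G.compE (↑F) v}))]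
    have hfib : ∀ e : {e : G.E // e ∈ G.compE (↑F) v},
        Nat.card {f : H.E // (⟨dc.πE f.1.1, hmap f⟩ : {e : G.E // e ∈ G.compE (↑F) v}) = e} = 2 := by
      intro e
      have he : Nat.card {f : H.E // (⟨dc.πE f.1.1, hmap f⟩ : {e : G.E // e ∈ G.compE (↑F) v}) = e}
          = Nat.card {f : Gt.E // dc.πE f = e.1} := by
        apply Nat.card_congr
        refine ⟨fun x => ⟨x.1.1.1, congrArg Subtype.val x.2⟩,
          fun y => ⟨⟨⟨y.1, fun hy => e.2.1 (by rwa [← y.2])⟩,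
            show dc.πV (Gt.s y.1) ∈ (G.deleteEdges (↑F : Set G.E)).componentOf v by
              rw [← dc.s_comm, y.2]; exact e.2.2.1,
            show dc.πV (Gt.t y.1) ∈ (G.deleteEdges (↑F : Set G.E)).componentOf v by
              rw [← dc.t_comm, y.2]; exact e.2.2.2⟩, Subtype.ext y.2⟩, ?_, ?_⟩
        · intro x; apply Subtype.ext; apply Subtype.ext; apply Subtype.ext; rfl
        · intro y; apply Subtype.ext; rfl
      have hnd : ¬ dc.dilatedE e.1 := fun hd => hfree _ e.2.2.1 (dc.dilatedV_s hd)
      rw [he, dc.nat_card_fiberE e.1, if_neg hnd]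
    refine Eq.trans (Finset.sum_congr rfl (fun e _ => hfib e)) ?_
    rw [Finset.sum_const, Finset.card_univ, smul_eq_mul, mul_comm, Nat.card_eq_fintype_card]
  have h1 : Nat.card H.V = @Fintype.card H.V H.fintV := @Nat.card_eq_fintype_card _ H.fintV
  have h2 : Nat.card H.E = @Fintype.card H.E H.fintE := @Nat.card_eq_fintype_card _ H.fintE
  omega

end DoubleCover


namespace DoubleCover

variable {Gt G : MetricGraph} (dc : DoubleCover Gt G)

lemma sum_compGenus (F : Finset G.E) (hcard : (F.card : ℤ) = Gt.genus - G.genus) :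
    ∑ q : G.Qc F, G.compGenus (↑F) q.out
      = (dc.md : ℤ) - dc.nd + Nat.card (G.Qc F) := by
  classical
  have hV : Nat.card G.V = ∑ q : G.Qc F, Nat.card (G.compV (↑F) q.out) := by
    rw [nat_card_eq_sum_fibers (G.cmk F)]
    apply Finset.sum_congr rfl
    intro q _
    apply Nat.card_congr
    exact Equiv.subtypeEquivRight
      (fun u => ⟨fun h => MetricGraph.mem_compV_iff_cmk.2 (h.trans (MetricGraph.cmk_out_eq q).symm),
        fun h => (MetricGraph.mem_compV_iff_cmk.1 h).trans (MetricGraph.cmk_out_eq q)⟩)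
  have hE : Nat.card {e : G.E // e ∉ (↑F : Set G.E)}
      = ∑ q : G.Qc F, Nat.card (G.compE (↑F) q.out) := by
    rw [nat_card_eq_sum_fibers
      (fun e : {e : G.E // e ∉ (↑F : Set G.E)} => G.cmk F (G.s e.1))]
    apply Finset.sum_congr rfl
    intro q _
    apply Nat.card_congr
    refine ⟨fun x => ⟨x.1.1, x.1.2, ?_, ?_⟩,
      fun e => ⟨⟨e.1, e.2.1⟩, (MetricGraph.mem_compV_iff_cmk.1 e.2.2.1).trans (MetricGraph.cmk_out_eq q)⟩,
      ?_, ?_⟩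
    · exact MetricGraph.mem_compV_iff_cmk.2 (x.2.trans (MetricGraph.cmk_out_eq q).symm)
    · have hs : G.s x.1.1 ∈ G.compV (↑F) q.out :=
        MetricGraph.mem_compV_iff_cmk.2 (x.2.trans (MetricGraph.cmk_out_eq q).symm)
      have hst : (G.deleteEdges (↑F : Set G.E)).Reach (G.s x.1.1) (G.t x.1.1) :=
        Relation.ReflTransGen.single (MetricGraph.deleteEdges_adj.2 ⟨x.1.1, x.1.2, Or.inl ⟨rfl, rfl⟩⟩)
      exact MetricGraph.compV_closed hs hst
    · intro x; apply Subtype.ext; apply Subtype.ext; rfl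
    · intro e; apply Subtype.ext; rfl
  have hEF : Nat.card {e : G.E // e ∉ (↑F : Set G.E)} + F.card = Nat.card G.E := by
    have h0 := Nat.card_congr (Equiv.sumCompl (fun e : G.E => e ∈ (↑F : Set G.E)))
    rw [Nat.card_sum] at h0
    have hFc : Nat.card {e : G.E // e ∈ (↑F : Set G.E)} = F.card := by
      have hx : Nat.card {e : G.E // e ∈ (↑F : Set G.E)} = (↑F : Set G.E).ncard :=
        Nat.card_coe_set_eq (↑F : Set G.E)
      rw [hx, Set.ncard_coe_finset]
    omega
  have hsplit : ∑ q : G.Qc F, G.compGenus (↑F) q.out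
      = (∑ q : G.Qc F, (Nat.card (G.compE (↑F) q.out) : ℤ))
        - (∑ q : G.Qc F, (Nat.card (G.compV (↑F) q.out) : ℤ))
        + Nat.card (G.Qc F) := by
    unfold MetricGraph.compGenus
    rw [Finset.sum_add_distrib, Finset.sum_sub_distrib, Finset.sum_const, Finset.card_univ,
      nsmul_eq_mul, mul_one, Nat.card_eq_fintype_card]
  have hVc : ∑ q : G.Qc F, (Nat.card (G.compV (↑F) q.out) : ℤ) = (Nat.card G.V : ℤ) := by
    rw [← Nat.cast_sum, ← hV]
  have hEc : ∑ q : G.Qc F, (Nat.card (G.compE (↑F) q.out) : ℤ)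
      = (Nat.card {e : G.E // e ∉ (↑F : Set G.E)} : ℤ) := by
    rw [← Nat.cast_sum, ← hE]
  have g2 : Nat.card Gt.V + dc.nd = 2 * Nat.card G.V := dc.nat_card_V_total
  have g3 : Nat.card Gt.E + dc.md = 2 * Nat.card G.E := dc.nat_card_E_total
  have g4 : (F.card : ℤ) = ((Nat.card Gt.E : ℤ) - Nat.card Gt.V + 1)
      - ((Nat.card G.E : ℤ) - Nat.card G.V + 1) := by
    rw [hcard]
    unfold MetricGraph.genus
    rw [Nat.card_eq_fintype_card, Nat.card_eq_fintype_card, Nat.card_eq_fintype_card,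
      Nat.card_eq_fintype_card]
  rw [hsplit, hVc, hEc]
  omega

lemma nd_eq_sum : dc.nd = ∑ D : dc.Qd, Nat.card {u : G.V | dc.dilReach D.out.1 u} := by
  rw [show dc.nd = Nat.card {v : G.V // dc.dilatedV v} from rfl,
    nat_card_eq_sum_fibers dc.dmk]
  exact Finset.sum_congr rfl (fun D _ => Nat.card_congr (dc.fiberDmkEquiv D))

lemma md_eq_sum : dc.md
    = ∑ D : dc.Qd, Nat.card {e : G.E | dc.dilatedE e ∧ G.s e ∈ {u : G.V | dc.dilReach D.out.1 u}} := by
  rw [show dc.md = Nat.card {e : G.E // dc.dilatedE e} from rfl,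
    nat_card_eq_sum_fibers dc.emk]
  exact Finset.sum_congr rfl (fun D _ => Nat.card_congr (dc.fiberEmkEquiv D))

lemma sum_dilCompGenus :
    ∑ D : dc.Qd, dc.dilCompGenus D.out.1 = (dc.md : ℤ) - dc.nd + Nat.card dc.Qd := by
  have hsplit : ∑ D : dc.Qd, dc.dilCompGenus D.out.1
      = (∑ D : dc.Qd, (Nat.card {e : G.E | dc.dilatedE e ∧ G.s e ∈ {u : G.V | dc.dilReach D.out.1 u}} : ℤ))
        - (∑ D : dc.Qd, (Nat.card {u : G.V | dc.dilReach D.out.1 u} : ℤ))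
        + Nat.card dc.Qd := by
    unfold dilCompGenus
    rw [Finset.sum_add_distrib, Finset.sum_sub_distrib, Finset.sum_const, Finset.card_univ,
      nsmul_eq_mul, mul_one, Nat.card_eq_fintype_card]
  have h1 : ∑ D : dc.Qd, (Nat.card {e : G.E | dc.dilatedE e ∧ G.s e ∈ {u : G.V | dc.dilReach D.out.1 u}} : ℤ)
      = (dc.md : ℤ) := by
    rw [← Nat.cast_sum, ← dc.md_eq_sum]
  have h2 : ∑ D : dc.Qd, (Nat.card {u : G.V | dc.dilReach D.out.1 u} : ℤ) = (dc.nd : ℤ) := by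
    rw [← Nat.cast_sum, ← dc.nd_eq_sum]
  rw [hsplit, h1, h2]

lemma card_dilV_comp (F : Finset G.E) (hF : ∀ e, dc.dilatedE e → e ∉ F) (v : G.V) :
    Nat.card {u : G.V // u ∈ G.compV (↑F) v ∧ dc.dilatedV u}
      = ∑ D : {D : dc.Qd // dc.phi F hF D = G.cmk F v},
          Nat.card {u : G.V | dc.dilReach D.1.out.1 u} := by
  have step1 : Nat.card {u : G.V // u ∈ G.compV (↑F) v ∧ dc.dilatedV u}
      = Nat.card {x : {v' : G.V // dc.dilatedV v'} // dc.phi F hF (dc.dmk x) = G.cmk F v} := by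
    apply Nat.card_congr
    refine ⟨fun u => ⟨⟨u.1, u.2.2⟩, MetricGraph.mem_compV_iff_cmk.1 u.2.1⟩,
      fun x => ⟨x.1.1, MetricGraph.mem_compV_iff_cmk.2 x.2, x.1.2⟩, ?_, ?_⟩
    · intro u; apply Subtype.ext; rfl
    · intro x; apply Subtype.ext; apply Subtype.ext; rfl
  rw [step1, nat_card_fiber_comp dc.dmk (dc.phi F hF) (G.cmk F v)]
  exact Finset.sum_congr rfl (fun D _ => Nat.card_congr (dc.fiberDmkEquiv D.1))

lemma card_dilE_comp (F : Finset G.E) (hF : ∀ e, dc.dilatedE e → e ∉ F) (v : G.V) :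
    Nat.card {e : G.E // e ∈ G.compE (↑F) v ∧ dc.dilatedE e}
      = ∑ D : {D : dc.Qd // dc.phi F hF D = G.cmk F v},
          Nat.card {e : G.E | dc.dilatedE e ∧ G.s e ∈ {u : G.V | dc.dilReach D.1.out.1 u}} := by
  have step1 : Nat.card {e : G.E // e ∈ G.compE (↑F) v ∧ dc.dilatedE e}
      = Nat.card {x : {e : G.E // dc.dilatedE e} // dc.phi F hF (dc.emk x) = G.cmk F v} := by
    apply Nat.card_congr
    refine ⟨fun e => ⟨⟨e.1, e.2.2⟩, MetricGraph.mem_compV_iff_cmk.1 e.2.1.2.1⟩,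
      fun x => ⟨x.1.1, ⟨?_, ?_, ?_⟩, x.1.2⟩, ?_, ?_⟩
    · exact fun hc => (hF x.1.1 x.1.2) (Finset.mem_coe.1 hc)
    · exact MetricGraph.mem_compV_iff_cmk.2 x.2
    · have hs : G.s x.1.1 ∈ G.compV (↑F) v := MetricGraph.mem_compV_iff_cmk.2 x.2
      have hst : dc.dilReach (G.s x.1.1) (G.t x.1.1) :=
        Relation.ReflTransGen.single ⟨x.1.1, x.1.2, Or.inl ⟨rfl, rfl⟩⟩
      exact MetricGraph.compV_closed hs (dc.dilReach_to_reach hF hst)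
    · intro e; apply Subtype.ext; rfl
    · intro x; apply Subtype.ext; apply Subtype.ext; rfl
  rw [step1, nat_card_fiber_comp dc.emk (dc.phi F hF) (G.cmk F v)]
  exact Finset.sum_congr rfl (fun D _ => Nat.card_congr (dc.fiberEmkEquiv D.1))

lemma card_Qd_eq_sum (F : Finset G.E) (hF : ∀ e, dc.dilatedE e → e ∉ F) :
    Nat.card dc.Qd = ∑ q : G.Qc F, Nat.card {D : dc.Qd // dc.phi F hF D = q} :=
  nat_card_eq_sum_fibers (dc.phi F hF)

end DoubleCover


namespace DoubleCover

variable {Gt G : MetricGraph} (dc : DoubleCover Gt G)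

lemma forward_lemma (F : Finset G.E)
    (hcard : (F.card : ℤ) = Gt.genus - G.genus)
    (hundil : ∀ e ∈ F, ¬ dc.dilatedE e)
    (hconn : ∀ v : G.V, dc.hasConnPreimage (↑F) v) :
    ∀ v : G.V, Xor' (dc.ogodCondDil (↑F) v) (dc.ogodCondFree (↑F) v) := by
  classical
  have hF : ∀ e, dc.dilatedE e → e ∉ F := fun e he hef => hundil e hef he
  set φ := dc.phi F hF with hφ
  -- per-component bookkeeping
  have perq : ∀ q : G.Qc F,
      G.compGenus (↑F) q.out
          - (∑ D : {D : dc.Qd // φ D = q}, dc.dilCompGenus D.1.out.1) - 1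
          + (Nat.card {D : dc.Qd // φ D = q} : ℤ)
        = (Nat.card {e : G.E // e ∈ G.compE (↑F) q.out ∧ ¬ dc.dilatedE e} : ℤ)
          - (Nat.card {u : G.V // u ∈ G.compV (↑F) q.out ∧ ¬ dc.dilatedV u} : ℤ) := by
    intro q
    have h2 := dc.card_dilV_comp F hF q.out
    rw [MetricGraph.cmk_out_eq q] at h2
    have h3 := dc.card_dilE_comp F hF q.out
    rw [MetricGraph.cmk_out_eq q] at h3
    have h4 : Nat.card {u : G.V // u ∈ G.compV (↑F) q.out}
        = Nat.card {u : G.V // u ∈ G.compV (↑F) q.out ∧ dc.dilatedV u}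
          + Nat.card {u : G.V // u ∈ G.compV (↑F) q.out ∧ ¬ dc.dilatedV u} :=
      nat_card_split _ _
    have h5 : Nat.card {e : G.E // e ∈ G.compE (↑F) q.out}
        = Nat.card {e : G.E // e ∈ G.compE (↑F) q.out ∧ dc.dilatedE e}
          + Nat.card {e : G.E // e ∈ G.compE (↑F) q.out ∧ ¬ dc.dilatedE e} :=
      nat_card_split _ _
    have h6 : ∑ D : {D : dc.Qd // φ D = q}, dc.dilCompGenus D.1.out.1
        = (Nat.card {e : G.E // e ∈ G.compE (↑F) q.out ∧ dc.dilatedE e} : ℤ)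
          - (Nat.card {u : G.V // u ∈ G.compV (↑F) q.out ∧ dc.dilatedV u} : ℤ)
          + (Nat.card {D : dc.Qd // φ D = q} : ℤ) := by
      unfold dilCompGenus
      rw [Finset.sum_add_distrib, Finset.sum_sub_distrib, Finset.sum_const, Finset.card_univ,
        nsmul_eq_mul, mul_one]
      have e1 : ∑ D : {D : dc.Qd // φ D = q},
          (Nat.card {e : G.E | dc.dilatedE e ∧ G.s e ∈ {u : G.V | dc.dilReach D.1.out.1 u}} : ℤ)
          = (Nat.card {e : G.E // e ∈ G.compE (↑F) q.out ∧ dc.dilatedE e} : ℤ) := by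
        rw [← Nat.cast_sum, ← h3]
      have e2 : ∑ D : {D : dc.Qd // φ D = q},
          (Nat.card {u : G.V | dc.dilReach D.1.out.1 u} : ℤ)
          = (Nat.card {u : G.V // u ∈ G.compV (↑F) q.out ∧ dc.dilatedV u} : ℤ) := by
        rw [← Nat.cast_sum, ← h2]
      rw [e1, e2]
      simp [Nat.card_eq_fintype_card]
    have h9 : G.compGenus (↑F) q.out
        = (Nat.card (G.compE (↑F) q.out) : ℤ) - (Nat.card (G.compV (↑F) q.out) : ℤ) + 1 := rfl
    have hb1 : Nat.card (G.compE (↑F) q.out)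
        = Nat.card {e : G.E // e ∈ G.compE (↑F) q.out} := rfl
    have hb2 : Nat.card (G.compV (↑F) q.out)
        = Nat.card {u : G.V // u ∈ G.compV (↑F) q.out} := rfl
    rw [h9, h6]
    omega
  have I1 : ∀ q : G.Qc F,
      Nat.card {u : G.V // u ∈ G.compV (↑F) q.out ∧ ¬ dc.dilatedV u}
        + Nat.card {D : dc.Qd // φ D = q}
      ≤ Nat.card {e : G.E // e ∈ G.compE (↑F) q.out ∧ ¬ dc.dilatedE e} + 1 := by
    intro q
    have := dc.comp_quot_ineq F hF q.out
    rw [MetricGraph.cmk_out_eq q] at this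
    exact this
  -- nonnegativity of the defect
  have Tnonneg : ∀ q : G.Qc F, 0 ≤
      G.compGenus (↑F) q.out
        - (∑ D : {D : dc.Qd // φ D = q}, dc.dilCompGenus D.1.out.1) - 1
        + (Nat.card {D : dc.Qd // φ D = q} : ℤ) := by
    intro q
    rcases Nat.eq_zero_or_pos (Nat.card {D : dc.Qd // φ D = q}) with hq | hq
    · haveI hempty : IsEmpty {D : dc.Qd // φ D = q} := by
        rcases Nat.card_eq_zero.1 hq with h | h
        · exact h
        · exact absurd h (not_infinite_iff_finite.2 (Finite.of_fintype _))
      have hsum0 : ∑ D : {D : dc.Qd // φ D = q}, dc.dilCompGenus D.1.out.1 = 0 := by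
        rw [Finset.univ_eq_empty, Finset.sum_empty]
      have hfree : ∀ u ∈ G.compV (↑F) q.out, ¬ dc.dilatedV u := by
        intro u hu hud
        exact hempty.false
          ⟨dc.dmk ⟨u, hud⟩, (MetricGraph.mem_compV_iff_cmk.1 hu).trans (MetricGraph.cmk_out_eq q)⟩
      have hVE := dc.free_comp_ineq F q.out hfree (hconn q.out)
      have h9 : G.compGenus (↑F) q.out
          = (Nat.card (G.compE (↑F) q.out) : ℤ) - (Nat.card (G.compV (↑F) q.out) : ℤ) + 1 := rfl
      rw [hsum0, hq, h9]
      omega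
    · have hperq := perq q
      have hineq := I1 q
      omega
  -- the total defect vanishes
  have hS1 := dc.sum_compGenus F hcard
  have hS2 : ∑ q : G.Qc F, ∑ D : {D : dc.Qd // φ D = q}, dc.dilCompGenus D.1.out.1
      = (dc.md : ℤ) - dc.nd + Nat.card dc.Qd := by
    rw [Fintype.sum_fiberwise φ (fun D => dc.dilCompGenus D.out.1)]
    exact dc.sum_dilCompGenus
  have hS3 : ∑ q : G.Qc F, (Nat.card {D : dc.Qd // φ D = q} : ℤ) = (Nat.card dc.Qd : ℤ) := by
    rw [← Nat.cast_sum, ← dc.card_Qd_eq_sum F hF]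
  have hSsum : ∑ q : G.Qc F,
      (G.compGenus (↑F) q.out
        - (∑ D : {D : dc.Qd // φ D = q}, dc.dilCompGenus D.1.out.1) - 1
        + (Nat.card {D : dc.Qd // φ D = q} : ℤ)) = 0 := by
    rw [Finset.sum_add_distrib, Finset.sum_sub_distrib, Finset.sum_sub_distrib,
      Finset.sum_const, Finset.card_univ, nsmul_eq_mul, mul_one, hS1, hS2, hS3]
    have : (Fintype.card (G.Qc F) : ℤ) = (Nat.card (G.Qc F) : ℤ) := by
      rw [Nat.card_eq_fintype_card]
    omega
  have hzero : ∀ q : G.Qc F,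
      G.compGenus (↑F) q.out
        - (∑ D : {D : dc.Qd // φ D = q}, dc.dilCompGenus D.1.out.1) - 1
        + (Nat.card {D : dc.Qd // φ D = q} : ℤ) = 0 := by
    intro q
    have := (Finset.sum_eq_zero_iff_of_nonneg (fun q _ => Tnonneg q)).1 hSsum q
      (Finset.mem_univ q)
    exact this
  -- now conclude for each vertex
  intro v
  set q : G.Qc F := G.cmk F v with hq
  have hvout : (G.deleteEdges (↑F : Set G.E)).Reach v q.out :=
    MetricGraph.cmk_eq_iff.1 (MetricGraph.cmk_out_eq q).symm
  have hvq : G.compV (↑F) v = G.compV (↑F) q.out := MetricGraph.compV_eq_of_reach hvout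
  by_cases hdil : ∃ z ∈ G.compV (↑F) v, dc.dilatedV z
  · obtain ⟨z, hz, hzd⟩ := hdil
    set D0 : dc.Qd := dc.dmk ⟨z, hzd⟩ with hD0def
    have hD0 : φ D0 = q := MetricGraph.mem_compV_iff_cmk.1 hz
    haveI : Nonempty {D : dc.Qd // φ D = q} := ⟨⟨D0, hD0⟩⟩
    have hpos : 0 < Nat.card {D : dc.Qd // φ D = q} := Nat.card_pos
    have hle : Nat.card {D : dc.Qd // φ D = q} ≤ 1 := by
      have h1 := perq q
      have h2 := I1 q
      have h3 := hzero q
      omega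
    have hone : Nat.card {D : dc.Qd // φ D = q} = 1 := le_antisymm hle hpos
    obtain ⟨x0, hx0⟩ := Nat.card_eq_one_iff_exists.1 hone
    have huniv : (Finset.univ : Finset {D : dc.Qd // φ D = q}) = {⟨D0, hD0⟩} := by
      apply Finset.eq_singleton_iff_unique_mem.2
      exact ⟨Finset.mem_univ _, fun b _ => (hx0 b).trans (hx0 ⟨D0, hD0⟩).symm⟩
    have hsum1 : ∑ D : {D : dc.Qd // φ D = q}, dc.dilCompGenus D.1.out.1
        = dc.dilCompGenus D0.out.1 := by
      rw [huniv, Finset.sum_singleton]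
    have hgenus : G.compGenus (↑F) v = dc.dilCompGenus z := by
      have hg1 : G.compGenus (↑F) v = G.compGenus (↑F) q.out := MetricGraph.compGenus_congr hvq
      have hg2 : dc.dilCompGenus D0.out.1 = dc.dilCompGenus z :=
        dc.dilCompGenus_congr (dc.dilReach_out_dmk ⟨z, hzd⟩)
      have h3 := hzero q
      rw [hsum1, hone] at h3
      rw [hg1, ← hg2]
      omega
    have huniq : ∀ w' : G.V, dc.dilatedV w' → w' ∈ G.compV (↑F) v → dc.dilReach z w' := by
      intro w' hw' hmem
      have hD' : φ (dc.dmk ⟨w', hw'⟩) = q := MetricGraph.mem_compV_iff_cmk.1 hmem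
      have : (⟨dc.dmk ⟨w', hw'⟩, hD'⟩ : {D : dc.Qd // φ D = q}) = ⟨D0, hD0⟩ :=
        (hx0 _).trans (hx0 _).symm
      have hDD : dc.dmk ⟨z, hzd⟩ = dc.dmk ⟨w', hw'⟩ := (congrArg Subtype.val this).symm
      exact dc.dmk_eq_iff.1 hDD
    refine Or.inl ⟨⟨z, hzd, hz, huniq, hgenus⟩, ?_⟩
    intro hfree
    exact hfree.1 z hz hzd
  · push_neg at hdil
    haveI hempty : IsEmpty {D : dc.Qd // φ D = q} := by
      refine ⟨fun D => ?_⟩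
      have hmem : D.1.out.1 ∈ G.compV (↑F) v := by
        apply MetricGraph.mem_compV_iff_cmk.2
        have h1 : φ D.1 = G.cmk F D.1.out.1 := by
          conv_lhs => rw [← Quot.out_eq D.1]
          rfl
        exact h1.symm.trans D.2
      exact hdil D.1.out.1 hmem D.1.out.2
    have hq0 : Nat.card {D : dc.Qd // φ D = q} = 0 := Nat.card_of_isEmpty
    have hsum0 : ∑ D : {D : dc.Qd // φ D = q}, dc.dilCompGenus D.1.out.1 = 0 := by
      rw [Finset.univ_eq_empty, Finset.sum_empty]
    have hgen1 : G.compGenus (↑F) v = 1 := by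
      have h3 := hzero q
      rw [hsum0, hq0] at h3
      have hg1 : G.compGenus (↑F) v = G.compGenus (↑F) q.out := MetricGraph.compGenus_congr hvq
      omega
    refine Or.inr ⟨⟨hdil, ?_, hgen1, hconn v⟩, ?_⟩
    · intro e he hde
      exact hdil (G.s e) he.2.1 (dc.dilatedV_s hde)
    · rintro ⟨w, hw, hmem, _⟩
      exact hdil w hmem hw

end DoubleCover

/-- **Statement 3** (Lemma 3.2).  For a dilated harmonic double cover
`π : Γ̃ → Γ` and a set `F` of `h = g(Γ̃) - g(Γ)` undilated edges, `F` is an ogod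
if and only if each connected component of `Γ ∖ F` satisfies exactly one of the
two (mutually exclusive) conditions (1) and (2). -/
theorem isOgod_iff_components
    (Gt G : MetricGraph) (dc : DoubleCover Gt G)
    (hGt : Gt.Connected) (hG : G.Connected) (hdil : dc.IsDilated)
    (F : Finset G.E)
    (hcard : (F.card : ℤ) = Gt.genus - G.genus)
    (hundil : ∀ e ∈ F, ¬ dc.dilatedE e) :
    dc.IsOgod F ↔
      ∀ v : G.V, Xor' (dc.ogodCondDil (↑F) v) (dc.ogodCondFree (↑F) v) := by
  constructor
  · intro hogod
    exact dc.forward_lemma F hcard hundil hogod.2.2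
  · intro hx
    refine ⟨hcard, hundil, ?_⟩
    intro v
    rcases hx v with ⟨h1, _⟩ | ⟨h2, _⟩
    · obtain ⟨w, hw, hmem, _, _⟩ := h1
      exact dc.hasConnPreimage_of_dilated hmem hw
    · exact h2.2.2.2
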